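/- Let G and G' be finite additive abelian groups and φ : G → G' a group homomorphism with kernel of size g₁. If A ⊆ G is a B_h[g] set in G (i.e., every element of G has at most g distinct representations as a sum of h elements of A, counted as multisets), then the image φ(A) is a B_h[g·g₁] set in G'. -/

import Mathlib

/-- `A` is a `B_h[g]` set in the additive commutative monoid `G`: every element `b` of `G`
has at most `g` distinct representations (as multisets) as a sum of `h` elements of `A`. -/
def IsBhg {G : Type*} [AddCommMonoid G] (A : Set G) (h g : ℕ) : Prop :=
  ∀ b : G, ∀ s : Finset (Multiset G),
    (∀ m ∈ s, Multiset.card m = h ∧ (∀ x ∈ m, x ∈ A) ∧ m.sum = b) → s.card ≤ g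

lemma lift_multiset {G G' : Type*} [AddCommGroup G] [AddCommGroup G'] (φ : G →+ G')
    (A : Set G) : ∀ t : Multiset G', (∀ x ∈ t, x ∈ φ '' A) →
    ∃ m : Multiset G, (∀ a ∈ m, a ∈ A) ∧ m.map φ = t := by
  intro t
  induction t using Multiset.induction with
  | empty => intro _; exact ⟨0, by simp, by simp⟩
  | cons x t ih =>
    intro ht
    obtain ⟨a, ha, rfl⟩ := ht x (Multiset.mem_cons_self x t)
    obtain ⟨m, hm, hmap⟩ := ih (fun y hy => ht y (Multiset.mem_cons_of_mem hy))
    refine ⟨a ::ₘ m, ?_, by simp [hmap]⟩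
    intro b hb
    rcases Multiset.mem_cons.1 hb with rfl | hbm
    · exact ha
    · exact hm b hbm

theorem stmt_0 {G G' : Type*} [AddCommGroup G] [Fintype G] [AddCommGroup G'] [Fintype G']
    (φ : G →+ G') (h g g₁ : ℕ) (hh : 2 ≤ h) (hg : 1 ≤ g)
    (hker : Nat.card {x : G // φ x = 0} = g₁)
    (A : Set G) (hA : IsBhg A h g) :
    IsBhg (φ '' A) h (g * g₁) := by
  classical
  intro b' s hs
  have hlift : ∀ m' ∈ s, ∃ m : Multiset G, (∀ a ∈ m, a ∈ A) ∧ m.map φ = m' := by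
    intro m' hm'
    exact lift_multiset φ A m' (hs m' hm').2.1
  choose! F hF1 hF2 using hlift
  have hinj : Set.InjOn F s := by
    intro x hx y hy hxy
    rw [← hF2 x hx, ← hF2 y hy, hxy]
  set fiber : Finset G := Finset.univ.filter (fun c => φ c = b') with hfiberdef
  have hmapfib : ∀ m' ∈ s, (F m').sum ∈ fiber := by
    intro m' hm'
    simp only [hfiberdef, Finset.mem_filter, Finset.mem_univ, true_and]
    rw [map_multiset_sum, hF2 m' hm']
    exact (hs m' hm').2.2
  have hcard : s.card = ∑ c ∈ fiber, (s.filter (fun m' => (F m').sum = c)).card :=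
    Finset.card_eq_sum_card_fiberwise hmapfib
  have hsub : ∀ c ∈ fiber, (s.filter (fun m' => (F m').sum = c)).card ≤ g := by
    intro c _
    set t := s.filter (fun m' => (F m').sum = c) with ht
    have hts : t ⊆ s := Finset.filter_subset _ _
    have himg : (t.image F).card = t.card :=
      Finset.card_image_of_injOn (hinj.mono (by exact_mod_cast hts))
    rw [← himg]
    apply hA c
    intro m hm
    obtain ⟨m', hm', rfl⟩ := Finset.mem_image.1 hm
    have hms : m' ∈ s := hts hm'
    refine ⟨?_, hF1 m' hms, (Finset.mem_filter.1 hm').2⟩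
    have : Multiset.card ((F m').map φ) = Multiset.card m' := by rw [hF2 m' hms]
    simpa using this.trans (hs m' hms).1
  have hfibcard : fiber.card ≤ g₁ := by
    rcases fiber.eq_empty_or_nonempty with he | ⟨x₀, hx₀⟩
    · simp [he]
    · have hx₀' : φ x₀ = b' := by
        simpa [hfiberdef] using hx₀
      have hker' : (Finset.univ.filter (fun c : G => φ c = 0)).card = g₁ := by
        rw [← hker, Nat.card_eq_fintype_card, Fintype.card_subtype]
      rw [← hker']
      apply Finset.card_le_card_of_injOn (fun x => x - x₀)
      · intro x hx
        simp only [hfiberdef, Finset.mem_coe, Finset.mem_filter, Finset.mem_univ, true_and] at hx ⊢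
        simp [hx, hx₀']
      · intro x _ y _ hxy
        simpa using sub_left_injective hxy
  calc s.card = ∑ c ∈ fiber, (s.filter (fun m' => (F m').sum = c)).card := hcard
    _ ≤ ∑ _c ∈ fiber, g := Finset.sum_le_sum hsub
    _ = fiber.card * g := by rw [Finset.sum_const, smul_eq_mul]
    _ ≤ g₁ * g := Nat.mul_le_mul_right g hfibcard
    _ = g * g₁ := mul_comm _ _
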